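/- Trace inequality for doubled Choi operators (Lemma 5 of the paper): Let H_{A'} be a copy of H_A, let ω be a Hermitian matrix on H_A⊗H_B, and let ρ be a Hermitian matrix on H_A⊗H_{A'}. On H_A⊗H_{A'}⊗H_B, let ω_{AB} denote ω acting on the factors A and B (tensored with I_{A'}), let ω_{A'B} denote the same matrix ω acting on the factors A' and B (tensored with I_A), and let ρ_{AA'} denote ρ acting on the factors A and A' (tensored with I_B). Then |Tr[ ω_{AB} · ω_{A'B} · ρ_{AA'} ]| ≤ Tr(ω²) · √(Tr(ρ²)). -/

import Mathlib

open scoped Kronecker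
open MeasureTheory Matrix
open scoped ComplexOrder

noncomputable section

namespace Decoupling

/-- We equip the unitary group with its Borel σ-algebra. -/
instance (n : Type*) [Fintype n] [DecidableEq n] :
    MeasurableSpace (Matrix.unitaryGroup n ℂ) := borel _

instance (n : Type*) [Fintype n] [DecidableEq n] :
    BorelSpace (Matrix.unitaryGroup n ℂ) := ⟨rfl⟩

/-- The trace norm (Schatten 1-norm) `‖X‖₁ = Tr √(XᴴX)` of a complex matrix. -/
def trNorm {n : Type*} [Fintype n] [DecidableEq n] (X : Matrix n n ℂ) : ℝ :=
  (((Matrix.isHermitian_conjTranspose_mul_self X).eigenvectorUnitary : Matrix n n ℂ) *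
    Matrix.diagonal (((↑) : ℝ → ℂ) ∘ Real.sqrt ∘ (Matrix.isHermitian_conjTranspose_mul_self X).eigenvalues) *
    (star (Matrix.isHermitian_conjTranspose_mul_self X).eigenvectorUnitary : Matrix n n ℂ)).trace.re

/-- The Hilbert–Schmidt norm (Schatten 2-norm) `‖X‖₂ = √(Tr (XᴴX))`. -/
def hsNorm {n : Type*} [Fintype n] (X : Matrix n n ℂ) : ℝ :=
  Real.sqrt ((Xᴴ * X).trace.re)

/-- Partial trace over the first tensor factor. -/
def ptrFst {a r : Type*} [Fintype a] (ρ : Matrix (a × r) (a × r) ℂ) : Matrix r r ℂ :=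
  Matrix.of fun i j => ∑ k, ρ (k, i) (k, j)

/-- Partial trace over the second tensor factor. -/
def ptrSnd {a r : Type*} [Fintype r] (ρ : Matrix (a × r) (a × r) ℂ) : Matrix a a ℂ :=
  Matrix.of fun i j => ∑ k, ρ (i, k) (j, k)

/-- The maximally entangled state `Φ_{AA'}` on `H_A ⊗ H_{A'}`. -/
def maxEnt (a : Type*) [Fintype a] [DecidableEq a] : Matrix (a × a) (a × a) ℂ :=
  Matrix.of fun p q => if p.1 = p.2 ∧ q.1 = q.2 then (Fintype.card a : ℂ)⁻¹ else 0

/-- The tensor product `T ⊗ E` of two superoperators (given on basis matrices, which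
for linear `T`, `E` agrees with the usual tensor product of linear maps). -/
def tensorHom {a a' b r : Type*} [Fintype a] [Fintype a'] [DecidableEq a] [DecidableEq a']
    (T : Matrix a a ℂ → Matrix b b ℂ) (E : Matrix a' a' ℂ → Matrix r r ℂ)
    (M : Matrix (a × a') (a × a') ℂ) : Matrix (b × r) (b × r) ℂ :=
  Matrix.of fun p q => ∑ i, ∑ j, ∑ k, ∑ l,
    M (i, k) (j, l) * T (Matrix.single i j 1) p.1 q.1
      * E (Matrix.single k l 1) p.2 q.2

/-- The Choi–Jamiołkowski representation `ω = (T ⊗ id)(Φ_{AA'})`, with the output (`B`)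
factor first and the copy `A'` second. -/
def choi {a b : Type*} [Fintype a] [DecidableEq a]
    (T : Matrix a a ℂ → Matrix b b ℂ) : Matrix (b × a) (b × a) ℂ :=
  tensorHom T id (maxEnt a)

/-- Reindexing that exchanges the two tensor factors. -/
def swapIdx {a b : Type*} (M : Matrix (a × b) (a × b) ℂ) : Matrix (b × a) (b × a) ℂ :=
  M.submatrix Prod.swap Prod.swap

/-- The conditional min-entropy `Hmin(A|B)_ρ` of a bipartite operator (conditioning on the
second tensor factor). -/
def Hmin {a b : Type*} [Fintype a] [DecidableEq a] [Fintype b]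
    (ρ : Matrix (a × b) (a × b) ℂ) : ℝ :=
  sSup {x : ℝ | ∃ σ : Matrix b b ℂ, σ.PosSemidef ∧ σ.trace = 1 ∧
    ((2 : ℝ) ^ (-x) • ((1 : Matrix a a ℂ) ⊗ₖ σ) - ρ).PosSemidef}

/-- A subnormalized density operator. -/
def IsSubDensity {n : Type*} [Fintype n] (ρ : Matrix n n ℂ) : Prop :=
  ρ.PosSemidef ∧ ρ.trace.re ≤ 1

/-- Conjugation `(U ⊗ 1_R) ρ (U ⊗ 1_R)ᴴ` on the first factor. -/
def conjA {a r : Type*} [Fintype a] [Fintype r] [DecidableEq r]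
    (U : Matrix a a ℂ) (ρ : Matrix (a × r) (a × r) ℂ) : Matrix (a × r) (a × r) ℂ :=
  (U ⊗ₖ (1 : Matrix r r ℂ)) * ρ * (U ⊗ₖ (1 : Matrix r r ℂ))ᴴ

/-- Two-fold conjugation `U^{⊗2} M (U^{⊗2})ᴴ`. -/
def conj2 {a : Type*} [Fintype a] (U : Matrix a a ℂ) (M : Matrix (a × a) (a × a) ℂ) :
    Matrix (a × a) (a × a) ℂ :=
  (U ⊗ₖ U) * M * (U ⊗ₖ U)ᴴ

/-- The Haar two-fold twirl `G_H(M) = ∫ U^{⊗2} M (U†)^{⊗2} dU` (entrywise integral). -/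
def twirlHaar {a : Type*} [Fintype a] [DecidableEq a]
    (μ : Measure (Matrix.unitaryGroup a ℂ)) (M : Matrix (a × a) (a × a) ℂ) :
    Matrix (a × a) (a × a) ℂ :=
  Matrix.of fun p q => ∫ U : Matrix.unitaryGroup a ℂ, conj2 (U : Matrix a a ℂ) M p q ∂μ

/-- The two-fold twirl `G_W(M) = ∑ i, p i • U_i^{⊗2} M (U_i†)^{⊗2}` of a finite family. -/
def twirlMix {ι a : Type*} [Fintype ι] [Fintype a] [DecidableEq a]
    (p : ι → ℝ) (V : ι → Matrix.unitaryGroup a ℂ) (M : Matrix (a × a) (a × a) ℂ) :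
    Matrix (a × a) (a × a) ℂ :=
  ∑ i, p i • conj2 (V i : Matrix a a ℂ) M

/-- `‖S‖⋄ ≤ δ`: the trace norm of `(S ⊗ id_R)(X)` is at most `δ ‖X‖₁` for every ancilla `R`
and every `X`. -/
def DiamondLE {c : Type*} [Fintype c] [DecidableEq c]
    (S : Matrix c c ℂ → Matrix c c ℂ) (δ : ℝ) : Prop :=
  ∀ (m : ℕ) (X : Matrix (c × Fin m) (c × Fin m) ℂ),
    trNorm (tensorHom S id X) ≤ δ * trNorm X

/-- `{(p i, V i)}` is a `δ`-approximate unitary two-design (w.r.t. the Haar probability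
measure `μ`). -/
def IsApproxTwoDesign {ι a : Type*} [Fintype ι] [Fintype a] [DecidableEq a]
    (μ : Measure (Matrix.unitaryGroup a ℂ))
    (p : ι → ℝ) (V : ι → Matrix.unitaryGroup a ℂ) (δ : ℝ) : Prop :=
  (∀ i, 0 ≤ p i) ∧ (∑ i, p i = 1) ∧
    DiamondLE (fun M => twirlMix p V M - twirlHaar μ M) δ

end Decoupling

namespace Decoupling

/-- Embed an operator on `H_A ⊗ H_B` into `H_A ⊗ H_{A'} ⊗ H_B` (identity on `A'`). -/
def embAB {a b : Type*} [DecidableEq a] (ω : Matrix (a × b) (a × b) ℂ) :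
    Matrix (a × a × b) (a × a × b) ℂ :=
  Matrix.of fun p q => (if p.2.1 = q.2.1 then 1 else 0) * ω (p.1, p.2.2) (q.1, q.2.2)

/-- Embed an operator on `H_{A'} ⊗ H_B` into `H_A ⊗ H_{A'} ⊗ H_B` (identity on `A`). -/
def embA'B {a b : Type*} [DecidableEq a] (ω : Matrix (a × b) (a × b) ℂ) :
    Matrix (a × a × b) (a × a × b) ℂ :=
  Matrix.of fun p q => (if p.1 = q.1 then 1 else 0) * ω (p.2.1, p.2.2) (q.2.1, q.2.2)

/-- Embed an operator on `H_A ⊗ H_{A'}` into `H_A ⊗ H_{A'} ⊗ H_B` (identity on `B`). -/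
def embAA' {a b : Type*} [DecidableEq b] (ρ : Matrix (a × a) (a × a) ℂ) :
    Matrix (a × a × b) (a × a × b) ℂ :=
  Matrix.of fun p q => (if p.2.2 = q.2.2 then 1 else 0) * ρ (p.1, p.2.1) (q.1, q.2.1)

private lemma cs_complex {ι : Type*} [Fintype ι] (f g : ι → ℂ) :
    ‖∑ i, f i * g i‖ ≤
      Real.sqrt (∑ i, ‖f i‖ ^ 2) * Real.sqrt (∑ i, ‖g i‖ ^ 2) := by
  have h1 : ‖∑ i, f i * g i‖ ≤ ∑ i, ‖f i‖ * ‖g i‖ := by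
    refine le_trans (norm_sum_le _ _) ?_
    simp [le_refl]
  refine h1.trans ?_
  rw [← Real.sqrt_mul (by positivity)]
  rw [Real.le_sqrt (by positivity) (by positivity)]
  exact Finset.sum_mul_sq_le_sq_mul_sq _ _ _

private lemma cs_sq {ι : Type*} [Fintype ι] (f g : ι → ℂ) :
    ‖∑ i, f i * g i‖ ^ 2 ≤
      (∑ i, ‖f i‖ ^ 2) * (∑ i, ‖g i‖ ^ 2) := by
  have h1 : ‖∑ i, f i * g i‖ ≤ ∑ i, ‖f i‖ * ‖g i‖ := by
    refine le_trans (norm_sum_le _ _) ?_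
    simp [le_refl]
  calc ‖∑ i, f i * g i‖ ^ 2
      ≤ (∑ i, ‖f i‖ * ‖g i‖) ^ 2 :=
        pow_le_pow_left₀ (by positivity) h1 2
    _ ≤ _ := Finset.sum_mul_sq_le_sq_mul_sq _ _ _

private lemma herm_sq {n : Type*} [Fintype n] (M : Matrix n n ℂ) (hM : M.IsHermitian) :
    ((M * M).trace).re = ∑ p, ∑ q, ‖M p q‖ ^ 2 := by
  have h : (M * M).trace = ∑ p, ∑ q, ((‖M p q‖ ^ 2 : ℝ) : ℂ) := by
    simp only [Matrix.trace, Matrix.diag_apply, Matrix.mul_apply]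
    refine Finset.sum_congr rfl fun p _ => Finset.sum_congr rfl fun q _ => ?_
    rw [← hM.apply q p, RCLike.star_def, Complex.mul_conj, Complex.sq_norm]
  rw [h]
  norm_cast

private lemma tr_eq {a b : Type*} [Fintype a] [DecidableEq a] [Fintype b] [DecidableEq b]
    (ω : Matrix (a × b) (a × b) ℂ) (ρ : Matrix (a × a) (a × a) ℂ) :
    (embAB ω * embA'B ω * embAA' (b := b) ρ).trace =
      ∑ u : a × a, ∑ v : a × a,
        (∑ w : b × b, ω (u.1, w.1) (v.1, w.2) * ω (u.2, w.2) (v.2, w.1)) * ρ v u := by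
  have h : ∀ u v : a × a, (∑ w : b × b, ω (u.1, w.1) (v.1, w.2) * ω (u.2, w.2) (v.2, w.1))
      = ∑ x3 : b, ∑ y3 : b, ω (u.1, x3) (v.1, y3) * ω (u.2, y3) (v.2, x3) := by
    intro u v; rw [Fintype.sum_prod_type]
  simp only [h]
  simp only [Matrix.trace, Matrix.diag_apply, Matrix.mul_apply, embAB, embA'B, embAA',
    Matrix.of_apply, Finset.sum_mul, Finset.mul_sum, ite_mul, zero_mul, one_mul,
    mul_ite, mul_zero, mul_one]
  rw [Fintype.sum_prod_type]
  simp only [Fintype.sum_prod_type]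
  simp only [Finset.sum_ite_irrel, Finset.sum_const_zero, Finset.sum_ite_eq,
    Finset.sum_ite_eq', Finset.mem_univ, if_true]
  refine Finset.sum_congr rfl fun x _ => Finset.sum_congr rfl fun y _ => ?_
  rw [Finset.sum_comm]
  exact Finset.sum_congr rfl fun z _ => Finset.sum_comm

/-- **Trace inequality for doubled Choi operators** (Lemma 5 of the paper):
`|Tr[ω_{AB} ω_{A'B} ρ_{AA'}]| ≤ Tr(ω²) √(Tr(ρ²))` for Hermitian `ω`, `ρ`. -/
theorem doubled_choi_trace_bound {a b : Type*} [Fintype a] [DecidableEq a]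
    [Fintype b] [DecidableEq b]
    (ω : Matrix (a × b) (a × b) ℂ) (hω : ω.IsHermitian)
    (ρ : Matrix (a × a) (a × a) ℂ) (hρ : ρ.IsHermitian) :
    ‖(embAB ω * embA'B ω * embAA' (b := b) ρ).trace‖ ≤
      ((ω * ω).trace).re * Real.sqrt (((ρ * ρ).trace).re) := by
  classical
  set S : ℝ := ∑ p, ∑ q, ‖ω p q‖ ^ 2 with hS
  set R : ℝ := ∑ p, ∑ q, ‖ρ p q‖ ^ 2 with hR
  have hSnn : 0 ≤ S := by
    rw [hS]; positivity
  have hωS : ((ω * ω).trace).re = S := herm_sq ω hω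
  have hρR : ((ρ * ρ).trace).re = R := herm_sq ρ hρ
  set f : (a × a) × (a × a) → ℂ := fun P =>
    ∑ w : b × b, ω (P.1.1, w.1) (P.2.1, w.2) * ω (P.1.2, w.2) (P.2.2, w.1) with hf
  set g : (a × a) × (a × a) → ℂ := fun P => ρ P.2 P.1 with hg
  have htr : (embAB ω * embA'B ω * embAA' (b := b) ρ).trace = ∑ P, f P * g P := by
    rw [tr_eq ω ρ]
    exact (Fintype.sum_prod_type (f := fun P => f P * g P)).symm
  have hgsum : (∑ P, ‖g P‖ ^ 2) = R := by
    rw [Fintype.sum_prod_type, hR]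
    exact Finset.sum_comm
  set F : a → a → ℝ := fun x y => ∑ w : b × b, ‖ω (x, w.1) (y, w.2)‖ ^ 2 with hFdef
  set G : a → a → ℝ := fun x y => ∑ w : b × b, ‖ω (x, w.2) (y, w.1)‖ ^ 2 with hGdef
  have hF : (∑ x, ∑ y, F x y) = S := by
    rw [hS]
    simp only [hFdef, Fintype.sum_prod_type]
    exact Finset.sum_congr rfl fun x _ => Finset.sum_comm
  have hG : (∑ x, ∑ y, G x y) = S := by
    rw [hS]
    simp only [hGdef, Fintype.sum_prod_type]
    refine Finset.sum_congr rfl fun x _ => ?_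
    have h2 : ∀ y : a, (∑ w1 : b, ∑ w2 : b, ‖ω (x, w2) (y, w1)‖ ^ 2)
        = ∑ w2 : b, ∑ w1 : b, ‖ω (x, w2) (y, w1)‖ ^ 2 := fun y => Finset.sum_comm
    simp only [h2]
    exact Finset.sum_comm
  have hfsum : (∑ P, ‖f P‖ ^ 2) ≤ S * S := by
    rw [Fintype.sum_prod_type]
    calc ∑ u : a × a, ∑ v : a × a, ‖f (u, v)‖ ^ 2
        ≤ ∑ u : a × a, ∑ v : a × a, F u.1 v.1 * G u.2 v.2 :=
          Finset.sum_le_sum fun u _ => Finset.sum_le_sum fun v _ => cs_sq _ _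
      _ = ∑ x1, ∑ x2, ∑ y1, ∑ y2, F x1 y1 * G x2 y2 := by
          rw [Fintype.sum_prod_type]
          exact Finset.sum_congr rfl fun x1 _ => Finset.sum_congr rfl fun x2 _ =>
            Fintype.sum_prod_type _
      _ = ∑ x1, ∑ y1, ∑ x2, ∑ y2, F x1 y1 * G x2 y2 :=
          Finset.sum_congr rfl fun x1 _ => Finset.sum_comm
      _ = (∑ x1, ∑ y1, F x1 y1) * (∑ x2, ∑ y2, G x2 y2) := by
          simp only [← Finset.mul_sum, ← Finset.sum_mul]
      _ = S * S := by rw [hF, hG]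
  have key := cs_complex f g
  rw [← htr, hgsum] at key
  refine key.trans ?_
  rw [hωS, hρR]
  gcongr
  calc Real.sqrt (∑ P, ‖f P‖ ^ 2) ≤ Real.sqrt (S * S) :=
        Real.sqrt_le_sqrt hfsum
    _ = S := Real.sqrt_mul_self hSnn


end Decoupling
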